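/- Let p be a prime, d ≥ 1 an integer, F the free group on d generators, and U a fully invariant subgroup of F such that G = F/U is a finite non-trivial p-group, say of order p^g. Then: (i) U ≤ F_2 = F^p[F,F], and G is minimally generated by d elements; (ii) the natural homomorphism Aut(G) → Aut(G/Φ(G)) is surjective (so the sequence 1 → K(G) → Aut(G) → GL(d, F_p) → 1 is exact, where K(G) is the kernel and Aut(G/Φ(G)) ≅ GL(d, F_p)); (iii) |K(G)| = p^{d(g−d)}; and (iv) more generally, for any normal subgroup L of G with L ≤ Φ(G) and |L| = p^m, the number of automorphisms of G that act trivially on G/L equals p^{dm}. -/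

import Mathlib

/-- `pStep p H = H^p [H, G]`: the subgroup generated by all `p`-th powers of elements of `H`
together with all commutators `[x, y]` with `x ∈ H` and `y ∈ G`. -/
def pStep (p : ℕ) {G : Type*} [Group G] (H : Subgroup G) : Subgroup G :=
  Subgroup.closure ((fun g => g ^ p) '' (H : Set G)) ⊔ ⁅H, (⊤ : Subgroup G)⁆

private def lowerPSeriesAux (p : ℕ) (G : Type*) [Group G] : ℕ → Subgroup G
  | 0 => ⊤
  | (k + 1) => pStep p (lowerPSeriesAux p G k)

/-- The lower `p`-series of `G`, indexed as in the paper: `G_1 = G` and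
`G_{i+1} = G_i^p [G_i, G]`.  (The value at `0` is junk, equal to `G_1 = G`.) -/
def lowerPSeries (p : ℕ) (G : Type*) [Group G] (i : ℕ) : Subgroup G :=
  lowerPSeriesAux p G (i - 1)

theorem pStep_le (p : ℕ) {G : Type*} [Group G] {H : Subgroup G} (hH : H.Normal) :
    pStep p H ≤ H := by
  apply sup_le
  · rw [Subgroup.closure_le]
    rintro _ ⟨h, hh, rfl⟩
    exact H.pow_mem hh p
  · exact Subgroup.commutator_le_left H ⊤

open scoped commutatorElement

theorem pStep_normal (p : ℕ) {G : Type*} [Group G] {H : Subgroup G} (hH : H.Normal) :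
    (pStep p H).Normal := by
  constructor
  intro x hx g
  have hxH : x ∈ H := pStep_le p hH hx
  have : g * x * g⁻¹ = ⁅g, x⁆ * x := by group
  rw [this]
  refine Subgroup.mul_mem _ ?_ hx
  refine le_sup_right (α := Subgroup G) ?_
  have hcomm : (⁅(⊤ : Subgroup G), H⁆ : Subgroup G) = ⁅H, (⊤ : Subgroup G)⁆ :=
    Subgroup.commutator_comm ⊤ H
  rw [← hcomm]
  exact Subgroup.commutator_mem_commutator (Subgroup.mem_top g) hxH

instance lowerPSeries_normal (p : ℕ) (G : Type*) [Group G] (i : ℕ) :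
    (lowerPSeries p G i).Normal := by
  rw [lowerPSeries]
  generalize i - 1 = k
  induction k with
  | zero => show (⊤ : Subgroup G).Normal; infer_instance
  | succ k ih => exact pStep_normal p ih

/-- A group is minimally generated by `d` elements if it is generated by some `d` elements
but by no fewer. -/
def MinGenBy (G : Type*) [Group G] (d : ℕ) : Prop :=
  (∃ S : Finset G, S.card = d ∧ Subgroup.closure (S : Set G) = ⊤) ∧
    ∀ S : Finset G, Subgroup.closure (S : Set G) = ⊤ → d ≤ S.card

/-- A subgroup is fully invariant if every endomorphism of the group maps it into itself. -/
def FullyInvariant {G : Type*} [Group G] (U : Subgroup G) : Prop :=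
  ∀ φ : G →* G, Subgroup.map φ U ≤ U


section Aux

open Subgroup

variable (p d : ℕ) [hp : Fact p.Prime]

/-- Generic: two monoid homs agreeing on a generating set agree. -/
theorem homExtOfClosure {G H : Type*} [Group G] [Group H] {S : Set G}
    (hS : Subgroup.closure S = ⊤) {f g : G →* H} (h : ∀ x ∈ S, f x = g x) : f = g := by
  ext x
  have hx : x ∈ Subgroup.closure S := hS ▸ Subgroup.mem_top x
  induction hx using Subgroup.closure_induction with
  | mem y hy => exact h y hy
  | one => simp
  | mul a b _ _ ha hb => simp [map_mul, ha, hb]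
  | inv a _ ha => simp [map_inv, ha]

abbrev Vp := Multiplicative (Fin d → ZMod p)

theorem vp_pow_p (v : Vp p d) : v ^ p = 1 := by
  have h : p • (Multiplicative.toAdd v) = 0 := by
    funext i
    simp [nsmul_eq_mul, ZMod.natCast_self]
  have : v = Multiplicative.ofAdd (Multiplicative.toAdd v) := rfl
  rw [this, ← ofAdd_nsmul, h, ofAdd_zero]

theorem vp_gen : Subgroup.closure
    (Set.range fun i : Fin d => Multiplicative.ofAdd (Pi.single i 1 : Fin d → ZMod p)) = ⊤ := by
  rw [eq_top_iff]
  intro v _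
  have hv : v = ∏ i : Fin d,
      (Multiplicative.ofAdd (Pi.single i 1 : Fin d → ZMod p)) ^ (Multiplicative.toAdd v i).val := by
    have : ∀ i : Fin d, (Multiplicative.ofAdd (Pi.single i 1 : Fin d → ZMod p)) ^
        (Multiplicative.toAdd v i).val
        = Multiplicative.ofAdd (Pi.single i (Multiplicative.toAdd v i)) := by
      intro i
      rw [← ofAdd_nsmul]
      congr 1
      funext j
      rcases eq_or_ne j i with rfl | hj
      · simp [ZMod.natCast_rightInverse (Multiplicative.toAdd v j)]
      · simp [Pi.single_eq_of_ne hj]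
    rw [Finset.prod_congr rfl (fun i _ => this i)]
    rw [← ofAdd_sum]
    exact (Finset.univ_sum_single (Multiplicative.toAdd v)).symm
  rw [hv]
  exact Subgroup.prod_mem _ fun i _ =>
    Subgroup.pow_mem _ (Subgroup.subset_closure (Set.mem_range_self i)) _

def βhom : FreeGroup (Fin d) →* Vp p d :=
  FreeGroup.lift fun i => Multiplicative.ofAdd (Pi.single i 1)

theorem βhom_surj : Function.Surjective (βhom p d) := by
  rw [← MonoidHom.range_eq_top]
  rw [eq_top_iff, ← vp_gen p d, Subgroup.closure_le]
  rintro _ ⟨i, rfl⟩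
  exact ⟨FreeGroup.of i, by simp [βhom]⟩


theorem pStep_le_ker_βhom : pStep p (⊤ : Subgroup (FreeGroup (Fin d))) ≤ (βhom p d).ker := by
  apply sup_le
  · rw [Subgroup.closure_le]
    rintro _ ⟨g, -, rfl⟩
    simp only [SetLike.mem_coe, MonoidHom.mem_ker, map_pow]
    exact vp_pow_p p d _
  · rw [Subgroup.commutator_le]
    intro g₁ _ g₂ _
    simp only [MonoidHom.mem_ker, map_commutatorElement]
    exact commutatorElement_eq_one_iff_mul_comm.mpr (mul_comm _ _)

theorem ker_βhom_le_pStep : (βhom p d).ker ≤ pStep p (⊤ : Subgroup (FreeGroup (Fin d))) := by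
  set F2 := pStep p (⊤ : Subgroup (FreeGroup (Fin d))) with hF2
  haveI : F2.Normal := pStep_normal p (by infer_instance)
  set Q := FreeGroup (Fin d) ⧸ F2 with hQ
  letI : CommGroup Q :=
    { (inferInstance : Group Q) with
      mul_comm := by
        intro a b
        induction a using QuotientGroup.induction_on with | _ x =>
        induction b using QuotientGroup.induction_on with | _ y =>
        show ((x * y : FreeGroup (Fin d)) : Q) = ((y * x : FreeGroup (Fin d)) : Q)
        rw [QuotientGroup.eq]
        have : (x * y)⁻¹ * (y * x) = ⁅y⁻¹, x⁻¹⁆ := by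
          simp [commutatorElement_def]; group
        rw [this]
        exact le_sup_right (α := Subgroup (FreeGroup (Fin d)))
          (Subgroup.commutator_mem_commutator (Subgroup.mem_top _) (Subgroup.mem_top _)) }
  have hpow : ∀ q : Q, q ^ p = 1 := by
    intro q
    induction q using QuotientGroup.induction_on with | _ x =>
    show ((x ^ p : FreeGroup (Fin d)) : Q) = 1
    rw [QuotientGroup.eq_one_iff]
    exact le_sup_left (α := Subgroup (FreeGroup (Fin d)))
      (Subgroup.subset_closure ⟨x, Subgroup.mem_top x, rfl⟩)
  -- the inverse homomorphism from V to Q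
  have key : ∀ a : Q, ∀ m : ℕ, a ^ m = a ^ (m % p) := fun a m => pow_eq_pow_mod m (hpow a)
  let γ : Vp p d →* Q :=
    { toFun := fun v => ∏ i : Fin d, ((FreeGroup.of i : FreeGroup (Fin d)) : Q) ^
        (Multiplicative.toAdd v i).val
      map_one' := by
        haveI : NeZero p := ⟨hp.out.ne_zero⟩
        simp [ZMod.val_zero]
      map_mul' := by
        intro v w
        have : ∀ i : Fin d, ((FreeGroup.of i : FreeGroup (Fin d)) : Q) ^
            (Multiplicative.toAdd (v * w) i).val
            = ((FreeGroup.of i : FreeGroup (Fin d)) : Q) ^ (Multiplicative.toAdd v i).val *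
              ((FreeGroup.of i : FreeGroup (Fin d)) : Q) ^ (Multiplicative.toAdd w i).val := by
          intro i
          have hvw : (Multiplicative.toAdd (v * w)) i
              = Multiplicative.toAdd v i + Multiplicative.toAdd w i := rfl
          rw [hvw, ZMod.val_add, ← key, pow_add]
        rw [Finset.prod_congr rfl (fun i _ => this i), Finset.prod_mul_distrib] }
  have hγβ : ∀ w : FreeGroup (Fin d), γ (βhom p d w) = (w : Q) := by
    have : γ.comp (βhom p d) = QuotientGroup.mk' F2 := by
      apply FreeGroup.ext_hom
      intro i
      show γ (βhom p d (FreeGroup.of i)) = _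
      have hβ : βhom p d (FreeGroup.of i)
          = Multiplicative.ofAdd (Pi.single i 1 : Fin d → ZMod p) := by simp [βhom]
      rw [hβ]
      show (∏ j : Fin d, ((FreeGroup.of j : FreeGroup (Fin d)) : Q) ^
        ((Pi.single i 1 : Fin d → ZMod p) j).val) = _
      rw [Finset.prod_eq_single i]
      · haveI : Fact (1 < p) := ⟨hp.out.one_lt⟩
        rw [Pi.single_eq_same, ZMod.val_one, pow_one]
        rfl
      · intro j _ hj
        haveI : NeZero p := ⟨hp.out.ne_zero⟩
        rw [Pi.single_eq_of_ne hj, ZMod.val_zero, pow_zero]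
      · intro h; exact absurd (Finset.mem_univ i) h
    intro w
    exact DFunLike.congr_fun this w
  intro w hw
  have h1 : γ (βhom p d w) = 1 := by rw [MonoidHom.mem_ker.mp hw, map_one]
  have := hγβ w
  rw [h1] at this
  exact (QuotientGroup.eq_one_iff w).mp this.symm

theorem ker_βhom : (βhom p d).ker = pStep p (⊤ : Subgroup (FreeGroup (Fin d))) :=
  le_antisymm (ker_βhom_le_pStep p d) (pStep_le_ker_βhom p d)


theorem exists_lift_endo_V (eps : Vp p d →* Vp p d) :
    ∃ φ : FreeGroup (Fin d) →* FreeGroup (Fin d),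
      (βhom p d).comp φ = eps.comp (βhom p d) := by
  choose pre hpre using fun i : Fin d => βhom_surj p d (eps (βhom p d (FreeGroup.of i)))
  refine ⟨FreeGroup.lift pre, FreeGroup.ext_hom _ _ fun i => ?_⟩
  simp [hpre i]

theorem map_pStep {G H : Type*} [Group G] [Group H] (f : G →* H)
    (hf : Function.Surjective f) (K : Subgroup G) :
    Subgroup.map f (pStep p K) = pStep p (Subgroup.map f K) := by
  rw [pStep, pStep, Subgroup.map_sup, Subgroup.map_commutator, MonoidHom.map_closure,
    Subgroup.map_top_of_surjective f hf]
  congr 2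
  rw [Subgroup.coe_map, Set.image_image, Set.image_image]
  exact Set.image_congr fun g _ => map_pow f g p

/-- In a nontrivial subgroup-simple quotient situation: every nontrivial subgroup of `G ⧸ M`
is everything, when `M` is a coatom. -/
theorem quotient_subgroup_eq_top {G : Type*} [Group G] {M : Subgroup G} [M.Normal]
    (hM : IsCoatom M) {H : Subgroup (G ⧸ M)} (hH : H ≠ ⊥) : H = ⊤ := by
  set K := Subgroup.comap (QuotientGroup.mk' M) H with hK
  have hMK : M ≤ K := by
    have := Subgroup.ker_le_comap (f := QuotientGroup.mk' M) H
    rwa [QuotientGroup.ker_mk'] at this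
  have hsurj : Function.Surjective (QuotientGroup.mk' M) := QuotientGroup.mk'_surjective M
  have hmapK : Subgroup.map (QuotientGroup.mk' M) K = H :=
    Subgroup.map_comap_eq_self_of_surjective hsurj H
  have hne : M ≠ K := by
    intro hMeq
    apply hH
    rw [← hmapK, ← hMeq]
    rw [eq_bot_iff]
    rintro _ ⟨x, hx, rfl⟩
    simp only [Subgroup.mem_bot]
    exact (QuotientGroup.eq_one_iff x).mpr hx
  have : K = ⊤ := hM.2 K (lt_of_le_of_ne hMK hne)
  rw [← hmapK, this, Subgroup.map_top_of_surjective _ hsurj]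

theorem coatom_pow_comm {G : Type*} [Group G] (hpg : IsPGroup p G)
    {M : Subgroup G} (hM : IsCoatom M) (hMn : M.Normal) :
    (∀ a : G, a ^ p ∈ M) ∧ (∀ a b : G, ⁅a, b⁆ ∈ M) := by
  obtain ⟨g0, hg0⟩ : ∃ g0 : G, g0 ∉ M := by
    by_contra h
    push_neg at h
    exact hM.1 (Subgroup.eq_top_iff' M |>.mpr h)
  set x0 : G ⧸ M := QuotientGroup.mk g0 with hx0def
  have hx0 : x0 ≠ 1 := fun h => hg0 ((QuotientGroup.eq_one_iff g0).mp h)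
  have hzx0 : Subgroup.zpowers x0 = ⊤ :=
    quotient_subgroup_eq_top hM (by simpa [Subgroup.zpowers_eq_bot] using hx0)
  have hx0p : x0 ^ p = 1 := by
    by_contra hne
    have hz : Subgroup.zpowers (x0 ^ p) = ⊤ :=
      quotient_subgroup_eq_top hM (by simpa [Subgroup.zpowers_eq_bot] using hne)
    obtain ⟨k, hk⟩ : x0 ∈ Subgroup.zpowers (x0 ^ p) := hz ▸ Subgroup.mem_top x0
    have h1 : x0 ^ ((p : ℤ) * k - 1) = 1 := by
      have hkk : (x0 ^ p) ^ k = x0 := hk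
      rw [← zpow_natCast x0 p, ← zpow_mul] at hkk
      rw [zpow_sub, hkk, zpow_one, mul_inv_cancel]
    have hordz : (orderOf x0 : ℤ) ∣ (p : ℤ) * k - 1 := orderOf_dvd_iff_zpow_eq_one.mpr h1
    obtain ⟨n, hn⟩ := hpg.to_quotient M x0
    obtain ⟨m, hm, hom⟩ := (Nat.dvd_prime_pow hp.out).mp (orderOf_dvd_of_pow_eq_one hn)
    have hm1 : 1 ≤ m := by
      rcases Nat.eq_zero_or_pos m with rfl | h
      · exfalso
        rw [pow_zero] at hom
        exact hx0 (orderOf_eq_one_iff.mp hom)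
      · exact h
    have hpord : (p : ℤ) ∣ (orderOf x0 : ℤ) := by
      rw [hom]
      exact_mod_cast dvd_pow_self p (Nat.one_le_iff_ne_zero.mp hm1)
    have hpdvd : (p : ℤ) ∣ (p : ℤ) * k - 1 := hpord.trans hordz
    have hpk : (p : ℤ) ∣ (p : ℤ) * k := Dvd.intro k rfl
    have hone : (p : ℤ) ∣ 1 := by
      have := dvd_sub hpk hpdvd
      simpa using this
    have h2 : (2 : ℤ) ≤ (p : ℤ) := by exact_mod_cast hp.out.two_le
    have := Int.le_of_dvd one_pos hone
    omega
  have hcomm : ∀ a b : G ⧸ M, a * b = b * a := by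
    intro a b
    obtain ⟨j, rfl⟩ : a ∈ Subgroup.zpowers x0 := hzx0 ▸ Subgroup.mem_top a
    obtain ⟨k, rfl⟩ : b ∈ Subgroup.zpowers x0 := hzx0 ▸ Subgroup.mem_top b
    rw [← zpow_add, ← zpow_add, add_comm]
  have hpow : ∀ a : G ⧸ M, a ^ p = 1 := by
    intro a
    obtain ⟨j, rfl⟩ : a ∈ Subgroup.zpowers x0 := hzx0 ▸ Subgroup.mem_top a
    rw [← zpow_natCast (x0 ^ j) p, ← zpow_mul, mul_comm, zpow_mul, zpow_natCast, hx0p,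
      one_zpow]
  constructor
  · intro a
    rw [← QuotientGroup.eq_one_iff, QuotientGroup.mk_pow]
    exact hpow _
  · intro a b
    rw [← QuotientGroup.eq_one_iff]
    have : (QuotientGroup.mk ⁅a, b⁆ : G ⧸ M) = ⁅(QuotientGroup.mk a : G ⧸ M), QuotientGroup.mk b⁆ :=
      rfl
    rw [this]
    exact commutatorElement_eq_one_iff_mul_comm.mpr (hcomm _ _)

theorem pStep_top_le_frattini {G : Type*} [Group G] [Finite G] (hpg : IsPGroup p G) :
    pStep p (⊤ : Subgroup G) ≤ frattini G := by
  show pStep p ⊤ ≤ Order.radical (Subgroup G)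
  rw [Order.radical]
  refine le_iInf₂ fun M hM => ?_
  haveI : Group.IsNilpotent G := hpg.isNilpotent
  have hM' : IsCoatom M := hM
  haveI hMn : M.Normal :=
    Subgroup.NormalizerCondition.normal_of_coatom M normalizerCondition_of_isNilpotent hM'
  obtain ⟨hpowM, hcommM⟩ := coatom_pow_comm p hpg hM' hMn
  apply sup_le
  · rw [Subgroup.closure_le]
    rintro _ ⟨g, -, rfl⟩
    exact hpowM g
  · rw [Subgroup.commutator_le]
    intro g₁ _ g₂ _
    exact hcommM g₁ g₂


theorem ker_coatom {A : Type*} [Group A] (c : A →* Multiplicative (ZMod p))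
    (hc : Function.Surjective c) : IsCoatom c.ker := by
  haveI : NeZero p := ⟨hp.out.ne_zero⟩
  haveI : Fact (1 < p) := ⟨hp.out.one_lt⟩
  have hcardV : Nat.card (Multiplicative (ZMod p)) = p := by
    simp [Nat.card_eq_fintype_card, ZMod.card]
  constructor
  · intro hker
    obtain ⟨a, ha⟩ := hc (Multiplicative.ofAdd (1 : ZMod p))
    have haker : a ∈ c.ker := by rw [hker]; exact Subgroup.mem_top a
    have : c a = 1 := haker
    rw [this] at ha
    have : (1 : ZMod p) = 0 := by
      have := congrArg Multiplicative.toAdd ha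
      simpa using this.symm
    exact one_ne_zero this
  · intro K hK
    obtain ⟨k, hkK, hk⟩ := SetLike.exists_of_lt hK
    have hck : c k ≠ 1 := fun h => hk (MonoidHom.mem_ker.mpr h)
    have hord : orderOf (c k) = p := by
      have h1 : orderOf (c k) ∣ p := by
        have := orderOf_dvd_natCard (c k)
        rwa [hcardV] at this
      rcases (Nat.dvd_prime hp.out).mp h1 with h | h
      · exact absurd (orderOf_eq_one_iff.mp h) hck
      · exact h
    have hzk : Subgroup.zpowers (c k) = ⊤ := by
      apply Subgroup.eq_top_of_card_eq
      rw [Nat.card_zpowers, hord, hcardV]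
    rw [eq_top_iff]
    intro g _
    obtain ⟨n, hn⟩ : c g ∈ Subgroup.zpowers (c k) := hzk ▸ Subgroup.mem_top _
    have hmem : g * (k ^ n)⁻¹ ∈ c.ker := by
      rw [MonoidHom.mem_ker, map_mul, map_inv, map_zpow,
        show c k ^ n = c g from hn, mul_inv_cancel]
    have : g = (g * (k ^ n)⁻¹) * k ^ n := by group
    rw [this]
    exact K.mul_mem (le_of_lt hK hmem) (K.zpow_mem hkK n)

section WithU

variable (U : Subgroup (FreeGroup (Fin d))) [U.Normal]

theorem xgen_closure :
    Subgroup.closure (Set.range fun i : Fin d =>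
      QuotientGroup.mk' U (FreeGroup.of i)) = ⊤ := by
  have : (Set.range fun i : Fin d => QuotientGroup.mk' U (FreeGroup.of i))
      = (QuotientGroup.mk' U) '' (Set.range FreeGroup.of) := by
    rw [← Set.range_comp]; rfl
  rw [this, ← MonoidHom.map_closure, FreeGroup.closure_range_of,
    Subgroup.map_top_of_surjective _ (QuotientGroup.mk'_surjective U)]

theorem exists_endo (hUfi : FullyInvariant U) (v : Fin d → FreeGroup (Fin d) ⧸ U) :
    ∃ θ : (FreeGroup (Fin d) ⧸ U) →* (FreeGroup (Fin d) ⧸ U),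
      ∀ i, θ (QuotientGroup.mk' U (FreeGroup.of i)) = v i := by
  choose pre hpre using fun i : Fin d => QuotientGroup.mk'_surjective U (v i)
  set φ : FreeGroup (Fin d) →* FreeGroup (Fin d) := FreeGroup.lift pre with hφ
  have hφU : ∀ u ∈ U, (QuotientGroup.mk' U).comp φ u = 1 := by
    intro u hu
    have : φ u ∈ U := hUfi φ ⟨u, hu, rfl⟩
    simpa [QuotientGroup.eq_one_iff] using this
  refine ⟨QuotientGroup.lift U ((QuotientGroup.mk' U).comp φ) hφU, fun i => ?_⟩
  show QuotientGroup.lift U ((QuotientGroup.mk' U).comp φ) hφU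
      (QuotientGroup.mk (FreeGroup.of i)) = v i
  show ((QuotientGroup.mk' U).comp φ) (FreeGroup.of i) = v i
  simp only [MonoidHom.comp_apply, hφ, FreeGroup.lift_apply_of]
  exact hpre i

theorem endo_ext {H : Type*} [Group H] {θ₁ θ₂ : (FreeGroup (Fin d) ⧸ U) →* H}
    (h : ∀ i, θ₁ (QuotientGroup.mk' U (FreeGroup.of i))
      = θ₂ (QuotientGroup.mk' U (FreeGroup.of i))) : θ₁ = θ₂ := by
  apply homExtOfClosure (xgen_closure d U)
  rintro _ ⟨i, rfl⟩
  exact h i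

theorem U_le_pStep (hUfi : FullyInvariant U) [Finite (FreeGroup (Fin d) ⧸ U)]
    [Nontrivial (FreeGroup (Fin d) ⧸ U)] (hpg : IsPGroup p (FreeGroup (Fin d) ⧸ U)) :
    U ≤ pStep p (⊤ : Subgroup (FreeGroup (Fin d))) := by
  set W := Subgroup.map (βhom p d) U with hW
  have hWinv : ∀ eps : Vp p d →* Vp p d, Subgroup.map eps W ≤ W := by
    intro eps
    obtain ⟨φ, hφ⟩ := exists_lift_endo_V p d eps
    rw [hW, Subgroup.map_map, ← hφ, ← Subgroup.map_map]
    exact Subgroup.map_mono (hUfi φ)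
  have hWbot : W = ⊥ := by
    by_contra hne
    obtain ⟨w, hwW, hw1⟩ : ∃ w ∈ W, w ≠ 1 := by
      by_contra h
      push_neg at h
      exact hne (eq_bot_iff.mpr fun w hw => Subgroup.mem_bot.mpr (h w hw))
    -- W is invariant and nontrivial, hence ⊤
    have hWtop : W = ⊤ := by
      rw [eq_top_iff]
      intro u _
      obtain ⟨i, hi⟩ : ∃ i, Multiplicative.toAdd w i ≠ 0 := by
        by_contra h
        push_neg at h
        apply hw1
        have : Multiplicative.toAdd w = 0 := funext h
        have := congrArg Multiplicative.ofAdd this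
        simpa using this
      let lin : (Fin d → ZMod p) →ₗ[ZMod p] (Fin d → ZMod p) :=
        (LinearMap.toSpanSingleton (ZMod p) _ (Multiplicative.toAdd u)).comp
          ((Multiplicative.toAdd w i)⁻¹ • LinearMap.proj i)
      let eps : Vp p d →* Vp p d := AddMonoidHom.toMultiplicative lin.toAddMonoidHom
      have heps : eps w = u := by
        show Multiplicative.ofAdd (lin (Multiplicative.toAdd w)) = u
        have : lin (Multiplicative.toAdd w)
            = ((Multiplicative.toAdd w i)⁻¹ * Multiplicative.toAdd w i) •
              Multiplicative.toAdd u := by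
          simp [lin, LinearMap.toSpanSingleton_apply, smul_smul]
        rw [this, inv_mul_cancel₀ hi, one_smul]
        rfl
      exact heps ▸ hWinv eps ⟨w, hwW, rfl⟩
    -- hence F = U ⊔ ker β, so G is its own pStep, contradiction
    have htop : (⊤ : Subgroup (FreeGroup (Fin d))) ≤ U ⊔ (βhom p d).ker := by
      intro f _
      have : βhom p d f ∈ W := hWtop ▸ Subgroup.mem_top _
      obtain ⟨u, hu, hβu⟩ := this
      have : u⁻¹ * f ∈ (βhom p d).ker := by
        rw [MonoidHom.mem_ker, map_mul, map_inv, hβu, inv_mul_cancel]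
      have hf : f = u * (u⁻¹ * f) := by group
      rw [hf]
      exact Subgroup.mul_mem _ (le_sup_left (α := Subgroup (FreeGroup (Fin d))) hu)
        (le_sup_right (α := Subgroup (FreeGroup (Fin d))) this)
    have hGtop : pStep p (⊤ : Subgroup (FreeGroup (Fin d) ⧸ U)) = ⊤ := by
      have h1 : Subgroup.map (QuotientGroup.mk' U) ⊤ = ⊤ :=
        Subgroup.map_top_of_surjective _ (QuotientGroup.mk'_surjective U)
      have hsup : U ⊔ (βhom p d).ker = ⊤ := top_le_iff.mp htop
      have h2 : Subgroup.map (QuotientGroup.mk' U) (U ⊔ (βhom p d).ker) = ⊤ := by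
        rw [hsup]; exact h1
      rw [Subgroup.map_sup, ker_βhom, map_pStep p _ (QuotientGroup.mk'_surjective U), h1]
        at h2
      have hU : Subgroup.map (QuotientGroup.mk' U) U = ⊥ := by
        rw [eq_bot_iff]
        rintro _ ⟨u, hu, rfl⟩
        simpa [Subgroup.mem_bot, QuotientGroup.eq_one_iff] using hu
      rw [hU, bot_sup_eq] at h2
      exact h2
    obtain ⟨M, hM⟩ : ∃ M : Subgroup (FreeGroup (Fin d) ⧸ U), IsCoatom M := by
      rcases eq_top_or_exists_le_coatom (⊥ : Subgroup (FreeGroup (Fin d) ⧸ U)) with h | h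
      · exact absurd h.symm bot_ne_top.symm
      · obtain ⟨M, hM, -⟩ := h; exact ⟨M, hM⟩
    have : (⊤ : Subgroup (FreeGroup (Fin d) ⧸ U)) ≤ M := by
      rw [← hGtop]
      exact (pStep_top_le_frattini p hpg).trans (frattini_le_coatom hM)
    exact hM.1 (top_le_iff.mp this)
  rw [← ker_βhom p d]
  intro u hu
  have : βhom p d u ∈ W := ⟨u, hu, rfl⟩
  rw [hWbot, Subgroup.mem_bot] at this
  exact MonoidHom.mem_ker.mpr this


theorem quot_iso (hU2 : U ≤ pStep p (⊤ : Subgroup (FreeGroup (Fin d)))) :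
    haveI : (pStep p (⊤ : Subgroup (FreeGroup (Fin d) ⧸ U))).Normal :=
      pStep_normal p (by infer_instance)
    ∃ e : ((FreeGroup (Fin d) ⧸ U) ⧸ pStep p (⊤ : Subgroup (FreeGroup (Fin d) ⧸ U)))
        ≃* Vp p d,
      ∀ f : FreeGroup (Fin d),
        e (QuotientGroup.mk (QuotientGroup.mk' U f)) = βhom p d f := by
  haveI hTn : (pStep p (⊤ : Subgroup (FreeGroup (Fin d) ⧸ U))).Normal :=
    pStep_normal p (by infer_instance)
  have hUker : U ≤ (βhom p d).ker := by rw [ker_βhom]; exact hU2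
  set β₁ : (FreeGroup (Fin d) ⧸ U) →* Vp p d :=
    QuotientGroup.lift U (βhom p d)
      (fun u hu => MonoidHom.mem_ker.mp (hUker hu)) with hβ₁
  have hβ₁mk : ∀ f : FreeGroup (Fin d), β₁ (QuotientGroup.mk' U f) = βhom p d f :=
    fun f => rfl
  have hT : Subgroup.map (QuotientGroup.mk' U) (pStep p ⊤)
      = pStep p (⊤ : Subgroup (FreeGroup (Fin d) ⧸ U)) := by
    rw [map_pStep p _ (QuotientGroup.mk'_surjective U),
      Subgroup.map_top_of_surjective _ (QuotientGroup.mk'_surjective U)]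
  have hcond : ∀ t, t ∈ pStep p (⊤ : Subgroup (FreeGroup (Fin d) ⧸ U)) → β₁ t = 1 := by
    intro t ht
    rw [← hT] at ht
    obtain ⟨f, hf, rfl⟩ := ht
    rw [hβ₁mk]
    exact MonoidHom.mem_ker.mp ((pStep_le_ker_βhom p d) hf)
  set b : ((FreeGroup (Fin d) ⧸ U) ⧸ pStep p (⊤ : Subgroup (FreeGroup (Fin d) ⧸ U)))
      →* Vp p d := QuotientGroup.lift _ β₁ hcond with hb
  have hbmk : ∀ f : FreeGroup (Fin d),
      b (QuotientGroup.mk (QuotientGroup.mk' U f)) = βhom p d f := fun f => rfl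
  have hbinj : Function.Injective b := by
    rw [injective_iff_map_eq_one]
    intro q hq
    induction q using QuotientGroup.induction_on with | _ x =>
    induction x using QuotientGroup.induction_on with | _ f =>
    have : βhom p d f = 1 := hq
    have hf : f ∈ pStep p (⊤ : Subgroup (FreeGroup (Fin d))) :=
      (ker_βhom p d) ▸ MonoidHom.mem_ker.mpr this
    rw [QuotientGroup.eq_one_iff]
    rw [← hT]
    exact ⟨f, hf, rfl⟩
  have hbsurj : Function.Surjective b := by
    rw [← MonoidHom.range_eq_top, eq_top_iff, ← vp_gen p d, Subgroup.closure_le]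
    rintro _ ⟨i, rfl⟩
    exact ⟨QuotientGroup.mk (QuotientGroup.mk' U (FreeGroup.of i)), by
      rw [hbmk]; simp [βhom]⟩
  exact ⟨MulEquiv.ofBijective b ⟨hbinj, hbsurj⟩, fun f => hbmk f⟩

theorem frattini_eq [Finite (FreeGroup (Fin d) ⧸ U)]
    (hpg : IsPGroup p (FreeGroup (Fin d) ⧸ U))
    (hU2 : U ≤ pStep p (⊤ : Subgroup (FreeGroup (Fin d)))) :
    frattini (FreeGroup (Fin d) ⧸ U) = pStep p (⊤ : Subgroup (FreeGroup (Fin d) ⧸ U)) := by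
  haveI hTn : (pStep p (⊤ : Subgroup (FreeGroup (Fin d) ⧸ U))).Normal :=
    pStep_normal p (by infer_instance)
  refine le_antisymm ?_ (pStep_top_le_frattini p hpg)
  obtain ⟨e, he⟩ := quot_iso p d U hU2
  intro x hx
  by_contra hxT
  have hx1 : (QuotientGroup.mk x : (FreeGroup (Fin d) ⧸ U) ⧸ pStep p ⊤) ≠ 1 :=
    fun h => hxT ((QuotientGroup.eq_one_iff x).mp h)
  have hex : Multiplicative.toAdd (e (QuotientGroup.mk x)) ≠ 0 := by
    intro h
    apply hx1
    apply e.injective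
    have := congrArg Multiplicative.ofAdd h
    simpa using this
  obtain ⟨i, hi⟩ : ∃ i, Multiplicative.toAdd (e (QuotientGroup.mk x)) i ≠ 0 :=
    Function.ne_iff.mp hex
  set c : (FreeGroup (Fin d) ⧸ U) →* Multiplicative (ZMod p) :=
    (AddMonoidHom.toMultiplicative (Pi.evalAddMonoidHom (fun _ : Fin d => ZMod p) i)).comp
      (e.toMonoidHom.comp (QuotientGroup.mk' (pStep p ⊤))) with hc
  have hcsurj : Function.Surjective c := by
    intro z
    obtain ⟨q, hq⟩ := e.surjective (Multiplicative.ofAdd (Pi.single i (Multiplicative.toAdd z)))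
    obtain ⟨y, rfl⟩ := QuotientGroup.mk'_surjective (pStep p ⊤) q
    refine ⟨y, ?_⟩
    show (AddMonoidHom.toMultiplicative (Pi.evalAddMonoidHom (fun _ : Fin d => ZMod p) i))
      (e (QuotientGroup.mk' (pStep p ⊤) y)) = z
    rw [hq]
    show Multiplicative.ofAdd ((Pi.single i (Multiplicative.toAdd z) : Fin d → ZMod p) i) = z
    rw [Pi.single_eq_same]
    rfl
  have hcx : c x ≠ 1 := by
    intro h
    apply hi
    have : Multiplicative.ofAdd (Multiplicative.toAdd (e (QuotientGroup.mk x)) i) = 1 := h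
    have := congrArg Multiplicative.toAdd this
    simpa using this
  have := (frattini_le_coatom (ker_coatom p c hcsurj)) hx
  exact hcx (MonoidHom.mem_ker.mp this)


theorem min_gen_by (hU2 : U ≤ pStep p (⊤ : Subgroup (FreeGroup (Fin d)))) :
    MinGenBy (FreeGroup (Fin d) ⧸ U) d := by
  classical
  haveI : NeZero p := ⟨hp.out.ne_zero⟩
  have hUker : U ≤ (βhom p d).ker := by rw [ker_βhom]; exact hU2
  set ξ : (FreeGroup (Fin d) ⧸ U) →* Vp p d :=
    QuotientGroup.lift U (βhom p d) (fun u hu => MonoidHom.mem_ker.mp (hUker hu)) with hξ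
  have hξmk : ∀ f : FreeGroup (Fin d), ξ (QuotientGroup.mk' U f) = βhom p d f := fun f => rfl
  have hξgen : ∀ i : Fin d, ξ (QuotientGroup.mk' U (FreeGroup.of i))
      = Multiplicative.ofAdd (Pi.single i 1 : Fin d → ZMod p) := by
    intro i; rw [hξmk]; simp [βhom]
  have hξsurj : Function.Surjective ξ := by
    intro v
    obtain ⟨f, hf⟩ := βhom_surj p d v
    exact ⟨QuotientGroup.mk' U f, hf⟩
  have hxinj : Function.Injective (fun i : Fin d => QuotientGroup.mk' U (FreeGroup.of i)) := by
    intro i j hij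
    have := congrArg ξ hij
    rw [hξgen i, hξgen j] at this
    have h2 : (Pi.single i 1 : Fin d → ZMod p) = Pi.single j 1 := by
      have := congrArg Multiplicative.toAdd this
      simpa using this
    by_contra hne
    have := congrFun h2 i
    rw [Pi.single_eq_same, Pi.single_eq_of_ne hne] at this
    exact one_ne_zero this
  constructor
  · refine ⟨Finset.image (fun i : Fin d => QuotientGroup.mk' U (FreeGroup.of i)) Finset.univ,
      ?_, ?_⟩
    · rw [Finset.card_image_of_injective _ hxinj, Finset.card_univ, Fintype.card_fin]
    · rw [Finset.coe_image, Finset.coe_univ, Set.image_univ]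
      exact xgen_closure d U
  · intro S hS
    -- push the generators into the vector space
    have hmap : Subgroup.closure (ξ '' (S : Set (FreeGroup (Fin d) ⧸ U))) = ⊤ := by
      rw [← MonoidHom.map_closure, hS, Subgroup.map_top_of_surjective _ hξsurj]
    set s : Finset (Fin d → ZMod p) :=
      Finset.image (fun g => Multiplicative.toAdd (ξ g)) S with hs
    have hspan : Submodule.span (ZMod p) (s : Set (Fin d → ZMod p)) = ⊤ := by
      rw [eq_top_iff]
      intro a _
      have ha : Multiplicative.ofAdd a ∈ Subgroup.closure
          (ξ '' (S : Set (FreeGroup (Fin d) ⧸ U))) := hmap ▸ Subgroup.mem_top _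
      have : ∀ v ∈ Subgroup.closure (ξ '' (S : Set (FreeGroup (Fin d) ⧸ U))),
          Multiplicative.toAdd v ∈ Submodule.span (ZMod p) (s : Set (Fin d → ZMod p)) := by
        intro v hv
        induction hv using Subgroup.closure_induction with
        | mem y hy =>
          obtain ⟨g, hg, rfl⟩ := hy
          exact Submodule.subset_span (by
            rw [hs, Finset.coe_image]
            exact ⟨g, hg, rfl⟩)
        | one => simpa using Submodule.zero_mem _
        | mul x y _ _ hx hy => exact Submodule.add_mem _ hx hy
        | inv x _ hx => exact Submodule.neg_mem _ hx
      simpa using this _ ha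
    have hrank : Module.finrank (ZMod p) (Fin d → ZMod p) = d := Module.finrank_fin_fun (ZMod p)
    have hle : Module.finrank (ZMod p) (Fin d → ZMod p) ≤ s.card := by
      have h1 := finrank_span_finset_le_card (R := ZMod p) s
      rw [Set.finrank, hspan, finrank_top] at h1
      exact h1
    calc d = Module.finrank (ZMod p) (Fin d → ZMod p) := hrank.symm
      _ ≤ s.card := hle
      _ ≤ S.card := Finset.card_image_le

theorem mem_of_mk_eq {G : Type*} [Group G] {L : Subgroup G} [L.Normal] {a b : G}
    (h : (QuotientGroup.mk a : G ⧸ L) = QuotientGroup.mk b) : a * b⁻¹ ∈ L := by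
  have h1 : a⁻¹ * b ∈ L := QuotientGroup.eq.mp h
  have : a * b⁻¹ = a * (a⁻¹ * b)⁻¹ * a⁻¹ := by group
  rw [this]
  exact Subgroup.Normal.conj_mem ‹L.Normal› _ (L.inv_mem h1) a

theorem mk_eq_of_mem {G : Type*} [Group G] {L : Subgroup G} [L.Normal] {a b : G}
    (h : a * b⁻¹ ∈ L) : (QuotientGroup.mk a : G ⧸ L) = QuotientGroup.mk b := by
  rw [QuotientGroup.eq]
  have : a⁻¹ * b = a⁻¹ * (a * b⁻¹)⁻¹ * a⁻¹⁻¹ := by group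
  rw [this]
  exact Subgroup.Normal.conj_mem ‹L.Normal› _ (L.inv_mem h) a⁻¹

theorem endo_surj [Finite (FreeGroup (Fin d) ⧸ U)] {L : Subgroup (FreeGroup (Fin d) ⧸ U)}
    (hL : L ≤ frattini (FreeGroup (Fin d) ⧸ U))
    (θ : (FreeGroup (Fin d) ⧸ U) →* (FreeGroup (Fin d) ⧸ U))
    (hθ : ∀ i, θ (QuotientGroup.mk' U (FreeGroup.of i))
      * (QuotientGroup.mk' U (FreeGroup.of i))⁻¹ ∈ L) : Function.Surjective θ := by
  rw [← MonoidHom.range_eq_top]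
  apply frattini_nongenerating (K := θ.range)
  rw [eq_top_iff, ← xgen_closure d U, Subgroup.closure_le]
  rintro _ ⟨i, rfl⟩
  have key : QuotientGroup.mk' U (FreeGroup.of i)
      = (θ (QuotientGroup.mk' U (FreeGroup.of i))
          * (QuotientGroup.mk' U (FreeGroup.of i))⁻¹)⁻¹
        * θ (QuotientGroup.mk' U (FreeGroup.of i)) := by group
  show QuotientGroup.mk' U (FreeGroup.of i) ∈ θ.range ⊔ frattini (FreeGroup (Fin d) ⧸ U)
  rw [key]
  exact Subgroup.mul_mem _
    (le_sup_right (α := Subgroup _) (Subgroup.inv_mem _ (hL (hθ i))))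
    (le_sup_left (α := Subgroup _) ⟨QuotientGroup.mk' U (FreeGroup.of i), rfl⟩)

theorem exists_auto (hUfi : FullyInvariant U) [Finite (FreeGroup (Fin d) ⧸ U)]
    {L : Subgroup (FreeGroup (Fin d) ⧸ U)} [L.Normal]
    (hL : L ≤ frattini (FreeGroup (Fin d) ⧸ U)) (ℓ : Fin d → L) :
    ∃ θ : (FreeGroup (Fin d) ⧸ U) ≃* (FreeGroup (Fin d) ⧸ U),
      (∀ x, θ x * x⁻¹ ∈ L) ∧
      ∀ i, θ (QuotientGroup.mk' U (FreeGroup.of i))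
        = (ℓ i : FreeGroup (Fin d) ⧸ U) * QuotientGroup.mk' U (FreeGroup.of i) := by
  obtain ⟨Θ, hΘ⟩ := exists_endo d U hUfi
    (fun i => (ℓ i : FreeGroup (Fin d) ⧸ U) * QuotientGroup.mk' U (FreeGroup.of i))
  have hmod : ∀ x, Θ x * x⁻¹ ∈ L := by
    have hhom : (QuotientGroup.mk' L).comp Θ = QuotientGroup.mk' L := by
      apply endo_ext
      intro i
      show (QuotientGroup.mk (Θ (QuotientGroup.mk' U (FreeGroup.of i)))
        : (FreeGroup (Fin d) ⧸ U) ⧸ L) = QuotientGroup.mk _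
      rw [hΘ i]
      apply mk_eq_of_mem
      rw [mul_inv_cancel_right]
      exact (ℓ i).2
    intro x
    apply mem_of_mk_eq
    exact DFunLike.congr_fun hhom x
  have hsurj : Function.Surjective Θ :=
    endo_surj d U hL Θ (fun i => by rw [hΘ i, mul_inv_cancel_right]; exact (ℓ i).2)
  have hinj : Function.Injective Θ := Finite.injective_iff_surjective.mpr hsurj
  exact ⟨MulEquiv.ofBijective Θ ⟨hinj, hsurj⟩, hmod, hΘ⟩

theorem auto_ext {θ₁ θ₂ : (FreeGroup (Fin d) ⧸ U) ≃* (FreeGroup (Fin d) ⧸ U)}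
    (h : ∀ i, θ₁ (QuotientGroup.mk' U (FreeGroup.of i))
      = θ₂ (QuotientGroup.mk' U (FreeGroup.of i))) : θ₁ = θ₂ := by
  have := endo_ext d U (θ₁ := θ₁.toMonoidHom) (θ₂ := θ₂.toMonoidHom) h
  exact MulEquiv.ext fun x => DFunLike.congr_fun this x

theorem card_auto (hUfi : FullyInvariant U) [Finite (FreeGroup (Fin d) ⧸ U)]
    {L : Subgroup (FreeGroup (Fin d) ⧸ U)} [L.Normal]
    (hL : L ≤ frattini (FreeGroup (Fin d) ⧸ U)) :
    Nat.card {θ : (FreeGroup (Fin d) ⧸ U) ≃* (FreeGroup (Fin d) ⧸ U) //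
      ∀ x, θ x * x⁻¹ ∈ L} = Nat.card L ^ d := by
  have e : {θ : (FreeGroup (Fin d) ⧸ U) ≃* (FreeGroup (Fin d) ⧸ U) //
      ∀ x, θ x * x⁻¹ ∈ L} ≃ (Fin d → L) :=
    { toFun := fun θ i => ⟨θ.1 (QuotientGroup.mk' U (FreeGroup.of i))
        * (QuotientGroup.mk' U (FreeGroup.of i))⁻¹, θ.2 _⟩
      invFun := fun ℓ => ⟨(exists_auto d U hUfi hL ℓ).choose,
        (exists_auto d U hUfi hL ℓ).choose_spec.1⟩
      left_inv := by
        intro θ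
        apply Subtype.ext
        apply auto_ext
        intro i
        rw [(exists_auto d U hUfi hL _).choose_spec.2 i]
        show (θ.1 (QuotientGroup.mk' U (FreeGroup.of i))
          * (QuotientGroup.mk' U (FreeGroup.of i))⁻¹) * _ = _
        rw [inv_mul_cancel_right]
      right_inv := by
        intro ℓ
        funext i
        apply Subtype.ext
        show (exists_auto d U hUfi hL ℓ).choose (QuotientGroup.mk' U (FreeGroup.of i))
          * (QuotientGroup.mk' U (FreeGroup.of i))⁻¹ = (ℓ i : FreeGroup (Fin d) ⧸ U)
        rw [(exists_auto d U hUfi hL ℓ).choose_spec.2 i, mul_inv_cancel_right] }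
  rw [Nat.card_congr e, Nat.card_fun, Nat.card_eq_fintype_card (α := Fin d), Fintype.card_fin]

theorem aut_lift (hUfi : FullyInvariant U) [Finite (FreeGroup (Fin d) ⧸ U)]
    (ψ : ((FreeGroup (Fin d) ⧸ U) ⧸ frattini (FreeGroup (Fin d) ⧸ U))
      ≃* ((FreeGroup (Fin d) ⧸ U) ⧸ frattini (FreeGroup (Fin d) ⧸ U))) :
    ∃ θ : (FreeGroup (Fin d) ⧸ U) ≃* (FreeGroup (Fin d) ⧸ U),
      ∀ x, ψ (QuotientGroup.mk' (frattini (FreeGroup (Fin d) ⧸ U)) x)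
        = QuotientGroup.mk' (frattini (FreeGroup (Fin d) ⧸ U)) (θ x) := by
  set Φ := frattini (FreeGroup (Fin d) ⧸ U) with hΦ
  choose v hv using fun i : Fin d =>
    QuotientGroup.mk'_surjective Φ (ψ (QuotientGroup.mk' Φ (QuotientGroup.mk' U (FreeGroup.of i))))
  obtain ⟨Θ, hΘ⟩ := exists_endo d U hUfi v
  have hhom : (QuotientGroup.mk' Φ).comp Θ = ψ.toMonoidHom.comp (QuotientGroup.mk' Φ) := by
    apply endo_ext
    intro i
    show QuotientGroup.mk' Φ (Θ (QuotientGroup.mk' U (FreeGroup.of i))) = _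
    rw [hΘ i, hv i]
    rfl
  have hsurj : Function.Surjective Θ := by
    rw [← MonoidHom.range_eq_top]
    apply frattini_nongenerating (K := Θ.range)
    rw [eq_top_iff]
    intro g _
    obtain ⟨q, hq⟩ := ψ.surjective (QuotientGroup.mk' Φ g)
    obtain ⟨y, rfl⟩ := QuotientGroup.mk'_surjective Φ q
    have : QuotientGroup.mk' Φ (Θ y) = QuotientGroup.mk' Φ g := by
      have h := DFunLike.congr_fun hhom y
      simp only [MonoidHom.comp_apply, MulEquiv.coe_toMonoidHom] at h
      exact h.trans hq
    have hmem : Θ y * g⁻¹ ∈ Φ := mem_of_mk_eq this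
    have hg : g = (Θ y * g⁻¹)⁻¹ * Θ y := by group
    rw [hg]
    exact Subgroup.mul_mem _
      (le_sup_right (α := Subgroup _) (Subgroup.inv_mem _ hmem))
      (le_sup_left (α := Subgroup _) ⟨y, rfl⟩)
  have hinj : Function.Injective Θ := Finite.injective_iff_surjective.mpr hsurj
  refine ⟨MulEquiv.ofBijective Θ ⟨hinj, hsurj⟩, fun x => ?_⟩
  exact (DFunLike.congr_fun hhom x).symm

end WithU


section GLchain

variable (p d : ℕ) [hp : Fact p.Prime]

/-- `MulAut` of a `Multiplicative` type is `AddAut` of the underlying type. -/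
def mulAutMultiplicative (A : Type*) [AddGroup A] :
    (Multiplicative A ≃* Multiplicative A) ≃* Multiplicative (AddAut A) :=
  { MulEquiv.toAdditive with
    map_mul' := fun f g => by ext a; rfl }

/-- Additive automorphisms of a `ZMod p`-module are linear automorphisms. -/
def addAutToLinear (A : Type*) [AddCommGroup A] [Module (ZMod p) A] :
    Multiplicative (AddAut A) ≃* (A ≃ₗ[ZMod p] A) where
  toFun f :=
    { AddMonoidHom.toZModLinearMap p (f.toAdd : A →+ A) with
      invFun := f.toAdd.symm
      left_inv := f.toAdd.left_inv
      right_inv := f.toAdd.right_inv }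
  invFun ℓ := Multiplicative.ofAdd ℓ.toAddEquiv
  left_inv f := by ext a; rfl
  right_inv ℓ := by ext a; rfl
  map_mul' f g := by ext a; rfl

/-- The full chain: `MulAut (Vp p d) ≃* GL (Fin d) (ZMod p)`. -/
noncomputable def vpAutToGL :
    (Vp p d ≃* Vp p d) ≃* GL (Fin d) (ZMod p) :=
  ((mulAutMultiplicative (Fin d → ZMod p)).trans
    (addAutToLinear p (Fin d → ZMod p))).trans
    ((Matrix.GeneralLinearGroup.toLin.trans
      (LinearMap.GeneralLinearGroup.generalLinearEquiv (ZMod p) (Fin d → ZMod p))).symm)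

end GLchain

end Aux

/-- **Theorem (automorphisms of a relatively free finite `p`-group).**
Let `F` be free on `d ≥ 1` generators, `U` fully invariant in `F`, and suppose
`G = F/U` is a finite non-trivial `p`-group of order `p^g`.  Then: (i) `U ≤ F₂` and `G`
is minimally generated by `d` elements; (ii) `Aut(G) → Aut(G/Φ(G))` is surjective and
`Aut(G/Φ(G)) ≅ GL(d,𝔽_p)`; (iii) the kernel `K(G)` — the automorphisms acting trivially
on `G/Φ(G)` — has order `p^{d(g-d)}`; and (iv) for any normal `L ≤ Φ(G)` of order `p^m`,
exactly `p^{dm}` automorphisms of `G` act trivially on `G/L`. -/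
theorem aut_of_relatively_free_pGroup (p d g : ℕ) (hp : p.Prime) (hd : 1 ≤ d)
    (U : Subgroup (FreeGroup (Fin d))) [U.Normal] (hUfi : FullyInvariant U)
    (hfin : Finite (FreeGroup (Fin d) ⧸ U))
    (hpg : IsPGroup p (FreeGroup (Fin d) ⧸ U))
    (hnt : Nontrivial (FreeGroup (Fin d) ⧸ U))
    (hcard : Nat.card (FreeGroup (Fin d) ⧸ U) = p ^ g) :
    let F := FreeGroup (Fin d)
    let G := F ⧸ U
    -- (i)
    (U ≤ lowerPSeries p F 2 ∧ MinGenBy G d) ∧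
    -- (ii)
    ((∀ ψ : (G ⧸ frattini G) ≃* (G ⧸ frattini G),
        ∃ θ : G ≃* G, ∀ x : G,
          ψ (QuotientGroup.mk' (frattini G) x) = QuotientGroup.mk' (frattini G) (θ x)) ∧
      Nonempty (((G ⧸ frattini G) ≃* (G ⧸ frattini G)) ≃* GL (Fin d) (ZMod p))) ∧
    -- (iii)
    Nat.card {θ : G ≃* G // ∀ x : G, θ x * x⁻¹ ∈ frattini G} = p ^ (d * (g - d)) ∧
    -- (iv)
    (∀ (L : Subgroup G) (m : ℕ), L.Normal → L ≤ frattini G → Nat.card L = p ^ m →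
      Nat.card {θ : G ≃* G // ∀ x : G, θ x * x⁻¹ ∈ L} = p ^ (d * m)) := by
  intro F G
  haveI hpF : Fact p.Prime := ⟨hp⟩
  haveI : NeZero p := ⟨hp.ne_zero⟩
  have hU2 : U ≤ pStep p (⊤ : Subgroup (FreeGroup (Fin d))) := U_le_pStep p d U hUfi hpg
  have hlps : lowerPSeries p (FreeGroup (Fin d)) 2 = pStep p ⊤ := by
    show lowerPSeriesAux p (FreeGroup (Fin d)) 1 = pStep p ⊤
    rw [lowerPSeriesAux, lowerPSeriesAux]
  have hfrat : frattini (FreeGroup (Fin d) ⧸ U)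
      = pStep p (⊤ : Subgroup (FreeGroup (Fin d) ⧸ U)) := frattini_eq p d U hpg hU2
  haveI : (pStep p (⊤ : Subgroup (FreeGroup (Fin d) ⧸ U))).Normal :=
    pStep_normal p (by infer_instance)
  obtain ⟨e0, he0⟩ := quot_iso p d U hU2
  have eΦ : ((FreeGroup (Fin d) ⧸ U) ⧸ frattini (FreeGroup (Fin d) ⧸ U)) ≃* Vp p d :=
    (QuotientGroup.quotientMulEquivOfEq hfrat).trans e0
  -- cardinality of the Frattini quotient
  have hcardVp : Nat.card (Vp p d) = p ^ d := by
    rw [← Nat.card_congr (Multiplicative.ofAdd (α := Fin d → ZMod p)), Nat.card_fun,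
      Nat.card_zmod, Nat.card_eq_fintype_card (α := Fin d), Fintype.card_fin]
  have hcardQ : Nat.card ((FreeGroup (Fin d) ⧸ U) ⧸ frattini (FreeGroup (Fin d) ⧸ U)) = p ^ d := by
    rw [Nat.card_congr eΦ.toEquiv, hcardVp]
  -- cardinality of the Frattini subgroup
  have hlag := Subgroup.card_eq_card_quotient_mul_card_subgroup
    (frattini (FreeGroup (Fin d) ⧸ U))
  rw [hcard, hcardQ] at hlag
  have hdg : d ≤ g := by
    have hdvd : p ^ d ∣ p ^ g := ⟨Nat.card (frattini (FreeGroup (Fin d) ⧸ U)), hlag⟩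
    have hle : p ^ d ≤ p ^ g := Nat.le_of_dvd (Nat.pow_pos (n := g) hp.pos) hdvd
    exact (Nat.pow_le_pow_iff_right hp.one_lt).mp hle
  have hcardΦ : Nat.card (frattini (FreeGroup (Fin d) ⧸ U)) = p ^ (g - d) := by
    have h2 : p ^ d * p ^ (g - d) = p ^ g := by
      rw [← pow_add]
      congr 1
      omega
    apply Nat.eq_of_mul_eq_mul_left (Nat.pow_pos (n := d) hp.pos)
    rw [h2, ← hlag]
  -- part (iv)
  have part4 : ∀ (L : Subgroup (FreeGroup (Fin d) ⧸ U)) (m : ℕ), L.Normal →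
      L ≤ frattini (FreeGroup (Fin d) ⧸ U) → Nat.card L = p ^ m →
      Nat.card {θ : (FreeGroup (Fin d) ⧸ U) ≃* (FreeGroup (Fin d) ⧸ U) //
        ∀ x, θ x * x⁻¹ ∈ L} = p ^ (d * m) := by
    intro L m hLn hLΦ hLcard
    haveI := hLn
    rw [card_auto d U hUfi hLΦ, hLcard, ← pow_mul, mul_comm]
  refine ⟨⟨hlps ▸ hU2, min_gen_by p d U hU2⟩, ⟨aut_lift d U hUfi,
    ⟨(MulAut.congr eΦ).trans (vpAutToGL p d)⟩⟩, ?_, part4⟩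
  exact part4 (frattini (FreeGroup (Fin d) ⧸ U)) (g - d) inferInstance le_rfl hcardΦ
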